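/- The function h(x) = (∏_{i=1}^{k-1}(2i-1)) · (∑_{i=1}^{2k-1} x_i) · exp(-(∑_{i=1}^{2k-1} x_i)²/2) on ℝ_{>0}^{2k-1} is a probability density: its integral over ℝ_{>0}^{2k-1} equals 1. -/

import Mathlib

open MeasureTheory Real Set

theorem lintegral_pi_Ioi_succ' {n : ℕ} (G : (Fin (n+1) → ℝ) → ENNReal) (hG : Measurable G) :
    ∫⁻ x in Set.univ.pi fun _ : Fin (n+1) => Ioi (0:ℝ), G x
      = ∫⁻ s in Ioi (0:ℝ), ∫⁻ y in Set.univ.pi fun _ : Fin n => Ioi (0:ℝ), G (Fin.cons s y) := by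
  have hS : MeasurableSet (Set.univ.pi fun _ : Fin (n+1) => Ioi (0:ℝ)) :=
    MeasurableSet.univ_pi fun _ => measurableSet_Ioi
  have hS' : MeasurableSet (Set.univ.pi fun _ : Fin n => Ioi (0:ℝ)) :=
    MeasurableSet.univ_pi fun _ => measurableSet_Ioi
  set e := (MeasurableEquiv.piFinSuccAbove (fun _ : Fin (n+1) => ℝ) 0).symm with he
  have mp := (measurePreserving_piFinSuccAbove (fun _ : Fin (n+1) => (volume : Measure ℝ)) 0).symm
  rw [← lintegral_indicator hS, volume_pi, ← mp.lintegral_comp (hG.indicator hS)]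
  have hswap := lintegral_prod (μ := (volume : Measure ℝ))
    (ν := Measure.pi fun _ : Fin n => (volume : Measure ℝ))
    (fun a : ℝ × (Fin n → ℝ) => (Set.univ.pi fun _ : Fin (n+1) => Ioi (0:ℝ)).indicator G (e a))
    (((hG.indicator hS).comp e.measurable).aemeasurable)
  rw [hswap]
  have hcons : ∀ (s : ℝ) (y : Fin n → ℝ), e (s, y) = Fin.cons s y := by
    intro s y
    simp [he, MeasurableEquiv.piFinSuccAbove_symm_apply, Fin.insertNthEquiv, Fin.insertNth_zero]
  have hmem : ∀ (s : ℝ) (y : Fin n → ℝ),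
      Fin.cons s y ∈ (Set.univ.pi fun _ : Fin (n+1) => Ioi (0:ℝ))
        ↔ s ∈ Ioi (0:ℝ) ∧ y ∈ (Set.univ.pi fun _ : Fin n => Ioi (0:ℝ)) := by
    intro s y
    simp [Set.mem_univ_pi, Fin.forall_fin_succ]
  rw [← lintegral_indicator (measurableSet_Ioi (a := (0:ℝ)))]
  congr 1 with s
  simp only [hcons]
  by_cases hs : s ∈ Ioi (0:ℝ)
  · rw [Set.indicator_of_mem hs, ← lintegral_indicator hS']
    congr 1 with y
    by_cases hy : y ∈ (Set.univ.pi fun _ : Fin n => Ioi (0:ℝ))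
    · rw [Set.indicator_of_mem ((hmem s y).2 ⟨hs, hy⟩), Set.indicator_of_mem hy]
    · rw [Set.indicator_of_notMem (fun h => hy ((hmem s y).1 h).2),
        Set.indicator_of_notMem hy]
  · rw [Set.indicator_of_notMem hs]
    have : ∀ y : Fin n → ℝ,
        (Set.univ.pi fun _ : Fin (n+1) => Ioi (0:ℝ)).indicator G (Fin.cons s y) = 0 :=
      fun y => Set.indicator_of_notMem (fun h => hs ((hmem s y).1 h).1) G
    simp [this]

theorem lintegral_Ioi_shift' (g : ℝ → ENNReal) (s : ℝ) :
    ∫⁻ t in Ioi (0:ℝ), g (s + t) = ∫⁻ u in Ioi s, g u := by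
  rw [← lintegral_indicator measurableSet_Ioi, ← lintegral_indicator measurableSet_Ioi,
    ← lintegral_add_left_eq_self (fun u => (Ioi s).indicator g u) s]
  congr 1 with t
  by_cases ht : t ∈ Ioi (0:ℝ)
  · rw [Set.indicator_of_mem ht, Set.indicator_of_mem (by simpa using ht.out)]
  · rw [Set.indicator_of_notMem ht, Set.indicator_of_notMem (by simpa using ht)]

theorem lintegral_swap_triangle' (H : ℝ → ℝ → ENNReal)
    (hH : Measurable fun p : ℝ × ℝ => H p.1 p.2) :
    ∫⁻ s in Ioi (0:ℝ), ∫⁻ u in Ioi s, H s u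
      = ∫⁻ u in Ioi (0:ℝ), ∫⁻ s in Ioo 0 u, H s u := by
  set T : Set (ℝ × ℝ) := {p : ℝ × ℝ | 0 < p.1 ∧ p.1 < p.2} with hT
  have hTm : MeasurableSet T :=
    (measurableSet_lt measurable_const measurable_fst).inter
      (measurableSet_lt measurable_fst measurable_snd)
  have hmem : ∀ s u : ℝ, ((s, u) ∈ T) ↔ (0 < s ∧ s < u) := fun s u => Iff.rfl
  have hKm : Measurable fun p : ℝ × ℝ => T.indicator (fun p : ℝ × ℝ => H p.1 p.2) p :=
    hH.indicator hTm
  have h1 : ∀ s : ℝ, (Ioi (0:ℝ)).indicator (fun s => ∫⁻ u in Ioi s, H s u) s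
      = ∫⁻ u, T.indicator (fun p : ℝ × ℝ => H p.1 p.2) (s, u) := by
    intro s
    by_cases hs : s ∈ Ioi (0:ℝ)
    · rw [Set.indicator_of_mem hs, ← lintegral_indicator measurableSet_Ioi]
      refine lintegral_congr fun u => ?_
      by_cases hu : s < u
      · rw [Set.indicator_of_mem (show u ∈ Ioi s from hu),
          Set.indicator_of_mem ((hmem s u).2 ⟨Set.mem_Ioi.1 hs, hu⟩)]
      · rw [Set.indicator_of_notMem (show u ∉ Ioi s from hu),
          Set.indicator_of_notMem (fun h => hu ((hmem s u).1 h).2)]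
    · rw [Set.indicator_of_notMem hs]
      symm
      have : ∀ u : ℝ, T.indicator (fun p : ℝ × ℝ => H p.1 p.2) (s, u) = 0 :=
        fun u => Set.indicator_of_notMem (fun h => hs (Set.mem_Ioi.2 ((hmem s u).1 h).1)) _
      simp [this]
  have h2 : ∀ u : ℝ, (∫⁻ s, T.indicator (fun p : ℝ × ℝ => H p.1 p.2) (s, u))
      = (Ioi (0:ℝ)).indicator (fun u => ∫⁻ s in Ioo 0 u, H s u) u := by
    intro u
    by_cases hu : u ∈ Ioi (0:ℝ)
    · rw [Set.indicator_of_mem hu, ← lintegral_indicator measurableSet_Ioo]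
      refine lintegral_congr fun s => ?_
      by_cases hs : s ∈ Ioo (0:ℝ) u
      · rw [Set.indicator_of_mem hs, Set.indicator_of_mem ((hmem s u).2 ⟨hs.1, hs.2⟩)]
      · rw [Set.indicator_of_notMem hs,
          Set.indicator_of_notMem (fun h => hs ⟨((hmem s u).1 h).1, ((hmem s u).1 h).2⟩)]
    · rw [Set.indicator_of_notMem hu]
      have : ∀ s : ℝ, T.indicator (fun p : ℝ × ℝ => H p.1 p.2) (s, u) = 0 := by
        intro s
        refine Set.indicator_of_notMem (fun h => hu (Set.mem_Ioi.2 ?_)) _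
        have := (hmem s u).1 h
        linarith [this.1, this.2]
      simp [this]
  calc ∫⁻ s in Ioi (0:ℝ), ∫⁻ u in Ioi s, H s u
      = ∫⁻ s, ∫⁻ u, T.indicator (fun p : ℝ × ℝ => H p.1 p.2) (s, u) := by
        rw [← lintegral_indicator measurableSet_Ioi]
        exact lintegral_congr h1
    _ = ∫⁻ u, ∫⁻ s, T.indicator (fun p : ℝ × ℝ => H p.1 p.2) (s, u) :=
        lintegral_lintegral_swap hKm.aemeasurable
    _ = ∫⁻ u in Ioi (0:ℝ), ∫⁻ s in Ioo 0 u, H s u := by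
        rw [← lintegral_indicator measurableSet_Ioi]
        exact lintegral_congr h2

theorem lintegral_Ioo_pow' (n : ℕ) (u : ℝ) (hu : 0 < u) (A : ℝ) (hA : 0 ≤ A) :
    ∫⁻ s in Ioo (0:ℝ) u, ENNReal.ofReal ((u - s)^n / n.factorial * A)
      = ENNReal.ofReal (u^(n+1) / (n+1).factorial * A) := by
  have hc : Continuous fun s : ℝ => (u - s)^n / n.factorial * A := by continuity
  have hint : IntegrableOn (fun s : ℝ => (u - s)^n / n.factorial * A) (Ioo 0 u) volume :=
    (hc.integrableOn_Icc (a := 0) (b := u)).mono_set Ioo_subset_Icc_self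
  have hnn : 0 ≤ᵐ[volume.restrict (Ioo (0:ℝ) u)] fun s => (u - s)^n / n.factorial * A := by
    refine (ae_restrict_iff' measurableSet_Ioo).2 (Filter.Eventually.of_forall fun s hs => ?_)
    have : 0 ≤ u - s := by linarith [hs.2]
    positivity
  rw [← ofReal_integral_eq_lintegral_ofReal hint hnn]
  congr 1
  have h1 : ∫ s in Ioo (0:ℝ) u, (u - s)^n / n.factorial * A
      = (∫ s in Ioo (0:ℝ) u, (u - s)^n) * (A / n.factorial) := by
    rw [← integral_mul_const]
    refine setIntegral_congr_fun measurableSet_Ioo fun s _ => ?_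
    ring
  have h2 : ∫ s in Ioo (0:ℝ) u, (u - s)^n = u^(n+1) / (n+1) := by
    rw [← integral_Ioc_eq_integral_Ioo, ← intervalIntegral.integral_of_le hu.le,
      intervalIntegral.integral_comp_sub_left (fun x => x ^ n) u]
    simp [integral_pow]
  rw [h1, h2, Nat.factorial_succ]
  push_cast
  have h3 : (n.factorial : ℝ) ≠ 0 := by positivity
  field_simp

theorem main_lintegral' (n : ℕ) : ∀ c : ℝ, 0 ≤ c →
    ∫⁻ x in Set.univ.pi fun _ : Fin (n+1) => Ioi (0:ℝ),
        ENNReal.ofReal ((c + ∑ i, x i) * Real.exp (-(c + ∑ i, x i) ^ 2 / 2))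
      = ∫⁻ t in Ioi (0:ℝ),
          ENNReal.ofReal (t ^ n / n.factorial * ((c + t) * Real.exp (-(c + t) ^ 2 / 2))) := by
  induction n with
  | zero =>
    intro c hc
    have hG : Measurable fun x : Fin 1 → ℝ =>
        ENNReal.ofReal ((c + ∑ i, x i) * Real.exp (-(c + ∑ i, x i) ^ 2 / 2)) := by
      fun_prop
    rw [lintegral_pi_Ioi_succ' _ hG]
    refine setLIntegral_congr_fun measurableSet_Ioi (fun s hs => ?_)
    have hsum : ∀ y : Fin 0 → ℝ, ∑ i : Fin 1, (Fin.cons s y) i = s := by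
      intro y; simp
    simp only [hsum]
    rw [setLIntegral_const]
    have : (volume : Measure (Fin 0 → ℝ)) (Set.univ.pi fun _ : Fin 0 => Ioi (0:ℝ)) = 1 := by
      simp [volume_pi]
    rw [this, mul_one]
    simp
  | succ n IH =>
    intro c hc
    have hG : Measurable fun x : Fin (n+2) → ℝ =>
        ENNReal.ofReal ((c + ∑ i, x i) * Real.exp (-(c + ∑ i, x i) ^ 2 / 2)) := by
      fun_prop
    rw [lintegral_pi_Ioi_succ' _ hG]
    have step1 : ∫⁻ s in Ioi (0:ℝ), ∫⁻ y in Set.univ.pi fun _ : Fin (n+1) => Ioi (0:ℝ),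
          ENNReal.ofReal ((c + ∑ i, (Fin.cons s y) i) *
            Real.exp (-(c + ∑ i, (Fin.cons s y) i) ^ 2 / 2))
        = ∫⁻ s in Ioi (0:ℝ), ∫⁻ t in Ioi (0:ℝ),
            ENNReal.ofReal (t ^ n / n.factorial *
              ((c + s + t) * Real.exp (-(c + s + t) ^ 2 / 2))) := by
      refine setLIntegral_congr_fun measurableSet_Ioi
        (fun s hs => ?_)
      have h1 : ∀ y : Fin (n+1) → ℝ, c + ∑ i, (Fin.cons s y) i = (c + s) + ∑ i, y i := by
        intro y; rw [Fin.sum_cons]; ring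
      simp only [h1]
      exact IH (c + s) (by have := hs.out; linarith)
    rw [step1]
    have step2 : ∫⁻ s in Ioi (0:ℝ), ∫⁻ t in Ioi (0:ℝ),
          ENNReal.ofReal (t ^ n / n.factorial *
            ((c + s + t) * Real.exp (-(c + s + t) ^ 2 / 2)))
        = ∫⁻ s in Ioi (0:ℝ), ∫⁻ u in Ioi s,
            ENNReal.ofReal ((u - s) ^ n / n.factorial *
              ((c + u) * Real.exp (-(c + u) ^ 2 / 2))) := by
      refine setLIntegral_congr_fun measurableSet_Ioi
        (fun s hs => ?_)
      rw [← lintegral_Ioi_shift' (fun u =>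
        ENNReal.ofReal ((u - s) ^ n / n.factorial *
          ((c + u) * Real.exp (-(c + u) ^ 2 / 2)))) s]
      refine setLIntegral_congr_fun measurableSet_Ioi
        (fun t ht => ?_)
      simp only [add_sub_cancel_left]
      ring_nf
    rw [step2]
    rw [lintegral_swap_triangle' _ (by fun_prop)]
    refine setLIntegral_congr_fun measurableSet_Ioi
      (fun u hu => ?_)
    have hA : 0 ≤ (c + u) * Real.exp (-(c + u) ^ 2 / 2) := by
      have := hu.out
      positivity
    exact lintegral_Ioo_pow' n u hu.out _ hA

theorem gaussian_moment' (m : ℕ) :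
    ∫ t in Ioi (0:ℝ), t ^ (2*m) / ((2*m).factorial : ℝ) * (t * Real.exp (-t^2/2))
      = 2^m * (m.factorial : ℝ) / ((2*m).factorial : ℝ) := by
  have hm : (0:ℝ) ≤ (m:ℝ) := Nat.cast_nonneg m
  have key := integral_rpow_mul_exp_neg_mul_rpow (p := 2) (q := (2*(m:ℝ)+1)) (b := 1/2)
    two_pos (by linarith) (by norm_num)
  have h1 : ∫ t in Ioi (0:ℝ), t ^ (2*m) / ((2*m).factorial : ℝ) * (t * Real.exp (-t^2/2))
      = (1/((2*m).factorial : ℝ)) *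
        ∫ t in Ioi (0:ℝ), t ^ (2*(m:ℝ)+1) * Real.exp (-(1/2) * t ^ (2:ℝ)) := by
    rw [← integral_const_mul]
    refine setIntegral_congr_fun measurableSet_Ioi fun t ht => ?_
    rw [show (2*(m:ℝ)+1) = ((2*m+1 : ℕ):ℝ) by push_cast; ring, rpow_natCast,
      Real.rpow_two, show -(1/2) * t ^ 2 = -t^2/2 by ring, pow_succ]
    ring
  have hpow : ((1:ℝ)/2) ^ (-(2*(m:ℝ)+1+1)/2) = 2^(m+1 : ℕ) := by
    rw [show ((1:ℝ)/2) = 2⁻¹ by norm_num,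
      Real.inv_rpow (by norm_num : (0:ℝ) ≤ 2),
      ← Real.rpow_neg (by norm_num : (0:ℝ) ≤ 2),
      show (-(-(2*(m:ℝ)+1+1)/2)) = ((m+1 : ℕ):ℝ) by push_cast; ring,
      Real.rpow_natCast]
  rw [h1, key, show ((2*(m:ℝ)+1)+1)/2 = ((m:ℝ)+1) by ring,
    Real.Gamma_nat_eq_factorial m, hpow, pow_succ]
  field_simp

theorem prod_odd' (m : ℕ) :
    (∏ i ∈ Finset.range m, (2 * (i : ℝ) + 1)) * (2^m * (m.factorial : ℝ))
      = ((2*m).factorial : ℝ) := by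
  induction m with
  | zero => simp
  | succ m ih =>
    rw [Finset.prod_range_succ, pow_succ, Nat.factorial_succ,
      show 2*(m+1) = 2*m+1+1 by ring, Nat.factorial_succ, Nat.factorial_succ]
    push_cast
    push_cast at ih
    linear_combination (2*(m:ℝ)+1) * 2 * ((m:ℝ)+1) * ih

theorem final_aux (m : ℕ) :
    ∫ x in Set.univ.pi fun _ : Fin (2*m+1) => Set.Ioi (0 : ℝ),
      (∏ i ∈ Finset.range m, (2 * (i : ℝ) + 1)) * (∑ i, x i) *
        Real.exp (-(∑ i, x i) ^ 2 / 2) = 1 := by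
  have hS : MeasurableSet (Set.univ.pi fun _ : Fin (2*m+1) => Ioi (0:ℝ)) :=
    MeasurableSet.univ_pi fun _ => measurableSet_Ioi
  simp_rw [mul_assoc]
  rw [integral_const_mul]
  have hnn : 0 ≤ᵐ[volume.restrict (Set.univ.pi fun _ : Fin (2*m+1) => Ioi (0:ℝ))]
      fun x : Fin (2*m+1) → ℝ => (∑ i, x i) * Real.exp (-(∑ i, x i) ^ 2 / 2) := by
    refine (ae_restrict_iff' hS).2 (Filter.Eventually.of_forall fun x hx => ?_)
    have hsum : 0 ≤ ∑ i, x i :=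
      Finset.sum_nonneg fun i _ => le_of_lt (hx i (Set.mem_univ i))
    positivity
  have hmeas : AEStronglyMeasurable
      (fun x : Fin (2*m+1) → ℝ => (∑ i, x i) * Real.exp (-(∑ i, x i) ^ 2 / 2))
      (volume.restrict (Set.univ.pi fun _ : Fin (2*m+1) => Ioi (0:ℝ))) := by
    have : Measurable fun x : Fin (2*m+1) → ℝ =>
        (∑ i, x i) * Real.exp (-(∑ i, x i) ^ 2 / 2) := by fun_prop
    exact this.aestronglyMeasurable
  rw [integral_eq_lintegral_of_nonneg_ae hnn hmeas]
  have hmain := main_lintegral' (2*m) 0 le_rfl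
  simp only [zero_add] at hmain
  rw [hmain]
  have hnn2 : 0 ≤ᵐ[volume.restrict (Ioi (0:ℝ))]
      fun t : ℝ => t ^ (2*m) / ((2*m).factorial : ℝ) * (t * Real.exp (-t^2/2)) := by
    refine (ae_restrict_iff' measurableSet_Ioi).2 (Filter.Eventually.of_forall fun t ht => ?_)
    have : (0:ℝ) < t := ht
    positivity
  have hint : IntegrableOn
      (fun t : ℝ => t ^ (2*m) / ((2*m).factorial : ℝ) * (t * Real.exp (-t^2/2)))
      (Ioi (0:ℝ)) := by
    have hm : (0:ℝ) ≤ (m:ℝ) := Nat.cast_nonneg m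
    have hi0 := integrableOn_rpow_mul_exp_neg_mul_sq (b := 1/2) (by norm_num)
      (s := (2*(m:ℝ)+1)) (by linarith)
    have hi1 : IntegrableOn
        (fun x : ℝ => 1/((2*m).factorial : ℝ) * (x ^ (2*(m:ℝ)+1) * Real.exp (-(1/2) * x^2)))
        (Ioi (0:ℝ)) := hi0.const_mul _
    refine hi1.congr_fun (fun t ht => ?_) measurableSet_Ioi
    beta_reduce
    rw [show (2*(m:ℝ)+1) = ((2*m+1 : ℕ):ℝ) by push_cast; ring, rpow_natCast,
      show -(1/2 : ℝ) * t ^ 2 = -t^2/2 by ring, pow_succ]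
    ring
  rw [← ofReal_integral_eq_lintegral_ofReal hint hnn2,
    ENNReal.toReal_ofReal (setIntegral_nonneg measurableSet_Ioi
      (fun t ht => by have : (0:ℝ) < t := ht; positivity)),
    gaussian_moment' m]
  have hp := prod_odd' m
  have hfac : ((2*m).factorial : ℝ) ≠ 0 := by positivity
  field_simp
  linarith [hp]

/-- The function `h(x) = (∏_{i=1}^{k-1}(2i-1)) (∑ x_i) exp(-(∑ x_i)²/2)` is a
probability density on `ℝ_{>0}^{2k-1}`. -/
theorem h_is_probability_density (k : ℕ) (hk : 1 ≤ k) :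
    ∫ x in Set.univ.pi fun _ : Fin (2 * k - 1) => Set.Ioi (0 : ℝ),
      (∏ i ∈ Finset.range (k - 1), (2 * (i : ℝ) + 1)) * (∑ i, x i) *
        Real.exp (-(∑ i, x i) ^ 2 / 2) = 1 := by
  obtain ⟨m, rfl⟩ : ∃ m, k = m + 1 := ⟨k - 1, by omega⟩
  have h2 : 2 * (m + 1) - 1 = 2 * m + 1 := by omega
  rw [h2, Nat.add_sub_cancel]
  exact final_aux m
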